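/- Let K be a field and let I and J be equigenerated monomial ideals of height 2 in K[x,y]. Then μ(I ∩ J) < μ(IJ). -/

import Mathlib

open MvPolynomial

/-- The minimal number of generators of an ideal. -/
noncomputable def mu {R : Type*} [CommRing R] (I : Ideal R) : ℕ :=
  sInf {m : ℕ | ∃ s : Finset R, s.card = m ∧ Ideal.span (s : Set R) = I}

/-- An equigenerated monomial ideal: generated by monomials all of the same total degree. -/
def IsEquigenMonomialIdeal {K : Type*} [Field K] {n : ℕ}
    (I : Ideal (MvPolynomial (Fin n) K)) : Prop :=
  ∃ (d : ℕ) (S : Set (Fin n →₀ ℕ)), S.Nonempty ∧ (∀ v ∈ S, (∑ i, v i) = d) ∧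
    I = Ideal.span ((fun v => monomial v (1 : K)) '' S)

/-- A monomial ideal of `K[x,y]` has height 2 iff it is proper and contains a power of `x`
and a power of `y`. -/
def HasHeightTwo {K : Type*} [Field K] (I : Ideal (MvPolynomial (Fin 2) K)) : Prop :=
  I ≠ ⊤ ∧ ∃ k l : ℕ, 0 < k ∧ 0 < l ∧
    (X 0 : MvPolynomial (Fin 2) K) ^ k ∈ I ∧ (X 1 : MvPolynomial (Fin 2) K) ^ l ∈ I

namespace NumGenAux

open Finsupp

/-- helper: the Finsupp on `Fin 2` with values `a, b`. -/
noncomputable def vec (a b : ℕ) : Fin 2 →₀ ℕ :=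
  Finsupp.single 0 a + Finsupp.single 1 b

lemma vec0 (a b : ℕ) : vec a b 0 = a := by
  rw [vec, Finsupp.add_apply, Finsupp.single_eq_same,
    Finsupp.single_eq_of_ne' (by decide : (1 : Fin 2) ≠ 0), add_zero]

lemma vec1 (a b : ℕ) : vec a b 1 = b := by
  rw [vec, Finsupp.add_apply, Finsupp.single_eq_same,
    Finsupp.single_eq_of_ne' (by decide : (0 : Fin 2) ≠ 1), zero_add]

lemma ext2 {v u : Fin 2 →₀ ℕ} (h0 : v 0 = u 0) (h1 : v 1 = u 1) : v = u :=
  Finsupp.ext (Fin.forall_fin_two.mpr ⟨h0, h1⟩)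

lemma le_iff2 {v u : Fin 2 →₀ ℕ} : v ≤ u ↔ v 0 ≤ u 0 ∧ v 1 ≤ u 1 := by
  rw [Finsupp.le_def, Fin.forall_fin_two]

lemma degree_eq (v : Fin 2 →₀ ℕ) : v.degree = v 0 + v 1 := by
  have h : v.degree = ∑ i : Fin 2, v i :=
    Finset.sum_subset (Finset.subset_univ _) fun i _ hi => Finsupp.notMem_support_iff.mp hi
  rw [h, Fin.sum_univ_two]

variable {K : Type*} [Field K]

/-- low-degree coefficients of elements of an equigenerated monomial ideal vanish -/
lemma coeff_eq_zero_of_degree_lt {D : ℕ} {U : Set (Fin 2 →₀ ℕ)}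
    (hU : ∀ v ∈ U, v 0 + v 1 = D) {p : MvPolynomial (Fin 2) K}
    (hp : p ∈ Ideal.span ((fun v => monomial v (1 : K)) '' U)) :
    ∀ u : Fin 2 →₀ ℕ, u 0 + u 1 < D → coeff u p = 0 := by
  classical
  refine Submodule.span_induction ?_ ?_ ?_ ?_ hp
  · rintro x ⟨v, hv, rfl⟩ u hu
    rw [coeff_monomial, if_neg]
    rintro rfl
    have := hU _ hv
    omega
  · intro u _; simp
  · intro x y hx hy ihx ihy u hu
    simp [ihx u hu, ihy u hu]
  · intro r x hx ih u hu
    rw [smul_eq_mul, coeff_mul]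
    refine Finset.sum_eq_zero fun wz hwz => ?_
    have h1 : wz.1 + wz.2 = u := Finset.HasAntidiagonal.mem_antidiagonal.mp hwz
    have e0 : u 0 = wz.1 0 + wz.2 0 := by rw [← h1, Finsupp.add_apply]
    have e1 : u 1 = wz.1 1 + wz.2 1 := by rw [← h1, Finsupp.add_apply]
    rw [ih wz.2 (by omega), mul_zero]

/-- the degree-D homogeneous component of an element of an equigenerated (degree D)
monomial ideal lies in the span of the components of any generating set -/
lemma homogeneousComponent_mem_span {D : ℕ} {U : Set (Fin 2 →₀ ℕ)}
    (hU : ∀ v ∈ U, v 0 + v 1 = D) (s : Finset (MvPolynomial (Fin 2) K))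
    (hs : Ideal.span (s : Set (MvPolynomial (Fin 2) K)) =
      Ideal.span ((fun v => monomial v (1 : K)) '' U))
    {p : MvPolynomial (Fin 2) K} (hp : p ∈ Ideal.span ((fun v => monomial v (1 : K)) '' U)) :
    homogeneousComponent D p ∈
      Submodule.span K (homogeneousComponent D '' (s : Set (MvPolynomial (Fin 2) K))) := by
  classical
  rw [← hs] at hp
  refine Submodule.span_induction ?_ ?_ ?_ ?_ hp
  · intro x hxs
    exact Submodule.subset_span ⟨x, hxs, rfl⟩
  · simp
  · intro x y _ _ ihx ihy
    rw [map_add]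
    exact Submodule.add_mem _ ihx ihy
  · intro r x hx ih
    have hxU : x ∈ Ideal.span ((fun v => monomial v (1 : K)) '' U) := hs ▸ hx
    have key : homogeneousComponent D (r • x) = coeff 0 r • homogeneousComponent D x := by
      ext u
      rw [coeff_homogeneousComponent, coeff_smul, coeff_homogeneousComponent]
      by_cases h : u.degree = D
      · rw [if_pos h, if_pos h, smul_eq_mul (α := K), smul_eq_mul, coeff_mul]
        rw [degree_eq] at h
        refine Finset.sum_eq_single (0, u) ?_ ?_
        · rintro ⟨w, z⟩ hwz hne
          have h1 : w + z = u := Finset.HasAntidiagonal.mem_antidiagonal.mp hwz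
          have e0 : u 0 = w 0 + z 0 := by rw [← h1, Finsupp.add_apply]
          have e1 : u 1 = w 1 + z 1 := by rw [← h1, Finsupp.add_apply]
          by_cases hz : z 0 + z 1 < D
          · rw [coeff_eq_zero_of_degree_lt hU hxU z hz, mul_zero]
          · exfalso
            apply hne
            have hw0 : w 0 = 0 := by omega
            have hw1 : w 1 = 0 := by omega
            have hw : w = 0 := ext2 (by simpa using hw0) (by simpa using hw1)
            subst hw
            rw [zero_add] at h1
            rw [h1]
        · intro habs
          exact absurd (Finset.HasAntidiagonal.mem_antidiagonal.mpr (zero_add u)) habs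
      · rw [if_neg h, if_neg h, smul_zero]
    rw [smul_eq_mul] at key ⊢
    rw [key]
    exact Submodule.smul_mem _ _ ih

/-- lower bound for `mu` of an equigenerated monomial ideal -/
lemma card_le_mu {D : ℕ} (UF : Finset (Fin 2 →₀ ℕ))
    (hU : ∀ v ∈ (UF : Set (Fin 2 →₀ ℕ)), v 0 + v 1 = D)
    (L : Ideal (MvPolynomial (Fin 2) K))
    (hL : L = Ideal.span ((fun v => monomial v (1 : K)) '' (UF : Set (Fin 2 →₀ ℕ)))) :
    UF.card ≤ mu L := by
  classical
  have hwit : Ideal.span ((UF.image fun v => monomial v (1 : K)) :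
      Set (MvPolynomial (Fin 2) K)) = L := by
    rw [Finset.coe_image, hL]
  refine le_csInf ⟨_, UF.image fun v => monomial v (1 : K), rfl, hwit⟩ ?_
  rintro m ⟨s, hcard, hspan⟩
  set b : {x // x ∈ UF} → MvPolynomial (Fin 2) K := fun v => monomial v.1 (1 : K) with hb
  have hli : LinearIndependent K b := by
    have h := (basisMonomials (Fin 2) K).linearIndependent.comp
      (Subtype.val : {x // x ∈ UF} → (Fin 2 →₀ ℕ)) Subtype.val_injective
    rw [coe_basisMonomials] at h
    exact h
  have hrange : Set.range b = (fun v => monomial v (1 : K)) '' (UF : Set (Fin 2 →₀ ℕ)) := by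
    rw [hb]
    ext q
    constructor
    · rintro ⟨⟨v, hv⟩, rfl⟩
      exact ⟨v, hv, rfl⟩
    · rintro ⟨v, hv, rfl⟩
      exact ⟨⟨v, hv⟩, rfl⟩
  have e1 : Module.finrank K (Submodule.span K (Set.range b)) = UF.card := by
    rw [finrank_span_eq_card hli, Fintype.card_coe]
  have e2 : Submodule.span K (Set.range b) ≤
      Submodule.span K ((s.image (homogeneousComponent D) :
        Finset (MvPolynomial (Fin 2) K)) : Set (MvPolynomial (Fin 2) K)) := by
    rw [hrange, Finset.coe_image]
    refine Submodule.span_le.mpr ?_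
    rintro _ ⟨v, hv, rfl⟩
    have hmem : monomial v (1 : K) ∈ Ideal.span
        ((fun v => monomial v (1 : K)) '' (UF : Set (Fin 2 →₀ ℕ))) :=
      Ideal.subset_span ⟨v, hv, rfl⟩
    have h2 := homogeneousComponent_mem_span hU s (by rw [hspan, hL]) hmem
    have h3 : homogeneousComponent D (monomial v (1 : K)) = monomial v (1 : K) := by
      ext u
      rw [coeff_homogeneousComponent]
      split_ifs with h
      · rfl
      · rw [coeff_monomial, if_neg]
        rintro rfl
        exact h ((degree_eq v).trans (hU v hv))
    rwa [h3] at h2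
  have e3 : Module.finrank K (Submodule.span K ((s.image (homogeneousComponent D) :
      Finset (MvPolynomial (Fin 2) K)) : Set (MvPolynomial (Fin 2) K))) ≤ s.card :=
    le_trans (finrank_span_finset_le_card _) Finset.card_image_le
  calc UF.card = Module.finrank K (Submodule.span K (Set.range b)) := e1.symm
    _ ≤ _ := Submodule.finrank_mono e2
    _ ≤ s.card := e3
    _ = m := hcard

/-- extraction of combinatorial data from an equigenerated height-two monomial ideal -/
lemma extract {I : Ideal (MvPolynomial (Fin 2) K)}
    (hI : IsEquigenMonomialIdeal I) (hht : HasHeightTwo I) :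
    ∃ (d : ℕ) (SF : Finset (Fin 2 →₀ ℕ)), 1 ≤ d ∧
      (∀ v ∈ (SF : Set (Fin 2 →₀ ℕ)), v 0 + v 1 = d) ∧
      I = Ideal.span ((fun v => monomial v (1 : K)) '' (SF : Set (Fin 2 →₀ ℕ))) ∧
      Finsupp.single 0 d ∈ SF ∧ Finsupp.single 1 d ∈ SF := by
  classical
  obtain ⟨d, S, hne, hdeg, hspan⟩ := hI
  have hdeg' : ∀ v ∈ S, v 0 + v 1 = d := fun v hv =>
    (Fin.sum_univ_two fun i => v i).symm.trans (hdeg v hv)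
  have hSfin : S.Finite := by
    apply Set.Finite.subset (Set.finite_Iic (vec d d))
    intro v hv
    have hd := hdeg' v hv
    rw [Set.mem_Iic, le_iff2, vec0, vec1]
    omega
  have hcoe : (hSfin.toFinset : Set (Fin 2 →₀ ℕ)) = S := hSfin.coe_toFinset
  have hd1 : 1 ≤ d := by
    by_contra hd
    obtain ⟨v, hv⟩ := hne
    have hdv := hdeg' v hv
    have hv0 : v = 0 := ext2 (by simp; omega) (by simp; omega)
    have h1I : (1 : MvPolynomial (Fin 2) K) ∈ I := by
      rw [hspan]
      have := Ideal.subset_span (Set.mem_image_of_mem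
        (fun v => monomial v (1 : K)) (hv0 ▸ hv))
      simpa using this
    exact hht.1 ((Ideal.eq_top_iff_one I).mpr h1I)
  obtain ⟨k, l, hk, hl, hxk, hyl⟩ := hht.2
  have hx : Finsupp.single 0 d ∈ S := by
    rw [hspan, X_pow_eq_monomial] at hxk
    obtain ⟨v, hvS, hvle⟩ := mem_ideal_span_monomial_image.mp hxk (Finsupp.single 0 k)
      (by simp [support_monomial])
    obtain ⟨h0, h1⟩ := le_iff2.mp hvle
    rw [Finsupp.single_eq_of_ne' (by decide : (0 : Fin 2) ≠ 1)] at h1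
    have hdv := hdeg' v hvS
    have : v = Finsupp.single 0 d := ext2 (by rw [Finsupp.single_eq_same]; omega)
      (by rw [Finsupp.single_eq_of_ne' (by decide : (0 : Fin 2) ≠ 1)]; omega)
    rwa [← this]
  have hy : Finsupp.single 1 d ∈ S := by
    rw [hspan, X_pow_eq_monomial] at hyl
    obtain ⟨v, hvS, hvle⟩ := mem_ideal_span_monomial_image.mp hyl (Finsupp.single 1 l)
      (by simp [support_monomial])
    obtain ⟨h0, h1⟩ := le_iff2.mp hvle
    rw [Finsupp.single_eq_of_ne' (by decide : (1 : Fin 2) ≠ 0)] at h0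
    have hdv := hdeg' v hvS
    have : v = Finsupp.single 1 d := ext2
      (by rw [Finsupp.single_eq_of_ne' (by decide : (1 : Fin 2) ≠ 0)]; omega)
      (by rw [Finsupp.single_eq_same]; omega)
    rwa [← this]
  exact ⟨d, hSfin.toFinset, hd1, by rw [hcoe]; exact hdeg', by rw [hcoe]; exact hspan,
    hSfin.mem_toFinset.mpr hx, hSfin.mem_toFinset.mpr hy⟩

/-- sup of elements of F below c -/
noncomputable def msup (F : Finset ℕ) (c : ℕ) : ℕ := (F.filter fun a => a ≤ c).sup id

lemma msup_mem {F : Finset ℕ} (h0 : 0 ∈ F) (c : ℕ) : msup F c ∈ F ∧ msup F c ≤ c := by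
  classical
  have hne : (F.filter fun a => a ≤ c).Nonempty :=
    ⟨0, Finset.mem_filter.mpr ⟨h0, Nat.zero_le _⟩⟩
  have hmax : msup F c = (F.filter fun a => a ≤ c).max' hne :=
    (Finset.sup'_eq_sup hne id).symm
  have := Finset.max'_mem _ hne
  rw [← hmax] at this
  exact ⟨(Finset.mem_filter.mp this).1, (Finset.mem_filter.mp this).2⟩

lemma le_msup {F : Finset ℕ} {a c : ℕ} (ha : a ∈ F) (hac : a ≤ c) : a ≤ msup F c := by
  classical
  exact Finset.le_sup (f := id) (Finset.mem_filter.mpr ⟨ha, hac⟩)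

/-- the staircase generator at x-exponent c for the intersection -/
noncomputable def stair (d e : ℕ) (AF BF : Finset ℕ) (c : ℕ) : Fin 2 →₀ ℕ :=
  vec c (max (d - msup AF c) (e - msup BF c))

end NumGenAux

open NumGenAux Pointwise

/-- Corollary 3.2: for equigenerated monomial ideals `I, J ⊂ K[x,y]` of height 2 one has
`μ(I ∩ J) < μ(IJ)`. -/
theorem numGen_inter_lt_numGen_mul {K : Type*} [Field K]
    (I J : Ideal (MvPolynomial (Fin 2) K))
    (hI : IsEquigenMonomialIdeal I) (hJ : IsEquigenMonomialIdeal J)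
    (hIht : HasHeightTwo I) (hJht : HasHeightTwo J) :
    mu (I ⊓ J) < mu (I * J) := by
  classical
  obtain ⟨d, SF, hd, hSdeg, hIspan, hSx, hSy⟩ := extract hI hIht
  obtain ⟨e, TF, he, hTdeg, hJspan, hTx, hTy⟩ := extract hJ hJht
  set AF : Finset ℕ := SF.image fun v => v 0 with hAF
  set BF : Finset ℕ := TF.image fun v => v 0 with hBF
  have hA0 : 0 ∈ AF := Finset.mem_image.mpr ⟨Finsupp.single 1 d, hSy,
    Finsupp.single_eq_of_ne' (by decide : (1 : Fin 2) ≠ 0)⟩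
  have hB0 : 0 ∈ BF := Finset.mem_image.mpr ⟨Finsupp.single 1 e, hTy,
    Finsupp.single_eq_of_ne' (by decide : (1 : Fin 2) ≠ 0)⟩
  set GF : Finset (Fin 2 →₀ ℕ) := (AF ∪ BF).image (stair d e AF BF) with hGF
  -- the intersection is generated by the staircase monomials
  have h_inter : Ideal.span ((fun v => monomial v (1 : K)) '' (GF : Set (Fin 2 →₀ ℕ)))
      = I ⊓ J := by
    ext p
    rw [mem_ideal_span_monomial_image, Ideal.mem_inf, hIspan, hJspan,
      mem_ideal_span_monomial_image, mem_ideal_span_monomial_image]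
    constructor
    · intro H
      constructor <;> intro u hu <;> obtain ⟨g, hg, hgu⟩ := H u hu <;>
        obtain ⟨c, hc, rfl⟩ := Finset.mem_image.mp (Finset.mem_coe.mp hg) <;>
        obtain ⟨hgu0, hgu1⟩ := le_iff2.mp hgu <;>
        rw [stair, vec0] at hgu0 <;> rw [stair, vec1] at hgu1
      · -- show membership in I
        obtain ⟨hmem, hle⟩ := msup_mem hA0 c
        obtain ⟨v, hvS, hva⟩ := Finset.mem_image.mp hmem
        have hvd := hSdeg v (Finset.mem_coe.mpr hvS)
        refine ⟨v, Finset.mem_coe.mpr hvS, le_iff2.mpr ⟨by omega, ?_⟩⟩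
        have h1 := le_max_left (d - msup AF c) (e - msup BF c)
        omega
      · -- show membership in J
        obtain ⟨hmem, hle⟩ := msup_mem hB0 c
        obtain ⟨w, hwT, hwa⟩ := Finset.mem_image.mp hmem
        have hwd := hTdeg w (Finset.mem_coe.mpr hwT)
        refine ⟨w, Finset.mem_coe.mpr hwT, le_iff2.mpr ⟨by omega, ?_⟩⟩
        have h1 := le_max_right (d - msup AF c) (e - msup BF c)
        omega
    · rintro ⟨H1, H2⟩ u hu
      obtain ⟨v, hv, hvu⟩ := H1 u hu
      obtain ⟨w, hw, hwu⟩ := H2 u hu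
      obtain ⟨hvu0, hvu1⟩ := le_iff2.mp hvu
      obtain ⟨hwu0, hwu1⟩ := le_iff2.mp hwu
      have hvd := hSdeg v hv
      have hwd := hTdeg w hw
      have hvA : v 0 ∈ AF := Finset.mem_image.mpr ⟨v, Finset.mem_coe.mp hv, rfl⟩
      have hwB : w 0 ∈ BF := Finset.mem_image.mpr ⟨w, Finset.mem_coe.mp hw, rfl⟩
      set c := max (v 0) (w 0) with hc
      have hcAB : c ∈ AF ∪ BF := by
        rcases le_total (v 0) (w 0) with h | h
        · rw [hc, max_eq_right h]; exact Finset.mem_union_right _ hwB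
        · rw [hc, max_eq_left h]; exact Finset.mem_union_left _ hvA
      refine ⟨stair d e AF BF c, Finset.mem_coe.mpr (Finset.mem_image_of_mem _ hcAB),
        le_iff2.mpr ⟨?_, ?_⟩⟩
      · rw [stair, vec0]; omega
      · rw [stair, vec1]
        have h1 : v 0 ≤ msup AF c := le_msup hvA (le_max_left _ _)
        have h2 : w 0 ≤ msup BF c := le_msup hwB (le_max_right _ _)
        have h3 : d - msup AF c ≤ u 1 := by omega
        have h4 : e - msup BF c ≤ u 1 := by omega
        exact max_le h3 h4
  -- upper bound for mu of the intersection
  have hupper : mu (I ⊓ J) ≤ GF.card := by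
    apply Nat.sInf_le
    exact ⟨GF.image fun v => monomial v (1 : K),
      Finset.card_image_of_injective GF (monomial_left_injective one_ne_zero),
      by rw [Finset.coe_image]; exact h_inter⟩
  -- the product ideal
  have hPdeg : ∀ v ∈ ((SF + TF : Finset (Fin 2 →₀ ℕ)) : Set (Fin 2 →₀ ℕ)),
      v 0 + v 1 = d + e := by
    intro v hv
    obtain ⟨a, ha, b, hb, rfl⟩ := Finset.mem_add.mp (Finset.mem_coe.mp hv)
    have h1 := hSdeg a (Finset.mem_coe.mpr ha)
    have h2 := hTdeg b (Finset.mem_coe.mpr hb)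
    rw [Finsupp.add_apply, Finsupp.add_apply]
    omega
  have hIJspan : I * J = Ideal.span ((fun v => monomial v (1 : K)) ''
      ((SF + TF : Finset (Fin 2 →₀ ℕ)) : Set (Fin 2 →₀ ℕ))) := by
    rw [hIspan, hJspan, Ideal.span_mul_span', Finset.coe_add]
    congr 1
    ext q
    constructor
    · rintro ⟨_, ⟨v, hv, rfl⟩, _, ⟨w, hw, rfl⟩, rfl⟩
      exact ⟨v + w, Set.add_mem_add hv hw, by simp [monomial_mul]⟩
    · rintro ⟨_, ⟨v, hv, w, hw, rfl⟩, rfl⟩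
      exact ⟨_, ⟨v, hv, rfl⟩, _, ⟨w, hw, rfl⟩, by simp [monomial_mul]⟩
  have hlower : (SF + TF).card ≤ mu (I * J) := card_le_mu (SF + TF) hPdeg (I * J) hIJspan
  -- cardinality comparison
  have hAle : ∀ a ∈ AF, a ≤ d := by
    intro a ha
    obtain ⟨v, hv, rfl⟩ := Finset.mem_image.mp ha
    have := hSdeg v (Finset.mem_coe.mpr hv)
    omega
  have hBle : ∀ a ∈ BF, a ≤ e := by
    intro a ha
    obtain ⟨w, hw, rfl⟩ := Finset.mem_image.mp ha
    have := hTdeg w (Finset.mem_coe.mpr hw)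
    omega
  have hcard : GF.card < (SF + TF).card := by
    have h1 : GF.card ≤ (AF ∪ BF).card := Finset.card_image_le
    have hψinj : Set.InjOn (fun c => vec c (d + e - c)) ((AF ∪ BF : Finset ℕ) : Set ℕ) := by
      intro a _ b _ h
      have h' : vec a (d + e - a) = vec b (d + e - b) := h
      have h2 := congrArg (fun g : Fin 2 →₀ ℕ => g 0) h'
      simpa [vec0] using h2
    have hsub : insert (Finsupp.single 0 (d + e))
        ((AF ∪ BF).image fun c => vec c (d + e - c)) ⊆ SF + TF := by
      intro x hx
      rcases Finset.mem_insert.mp hx with rfl | hx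
      · have hs : Finsupp.single (0 : Fin 2) (d + e)
            = Finsupp.single 0 d + Finsupp.single 0 e := by rw [Finsupp.single_add]
        rw [hs]
        exact Finset.add_mem_add hSx hTx
      · obtain ⟨c, hc, rfl⟩ := Finset.mem_image.mp hx
        rcases Finset.mem_union.mp hc with hc' | hc'
        · obtain ⟨v, hv, rfl⟩ := Finset.mem_image.mp hc'
          have hvd := hSdeg v (Finset.mem_coe.mpr hv)
          have heq : vec (v 0) (d + e - v 0) = v + Finsupp.single 1 e := ext2
            (by rw [vec0, Finsupp.add_apply,
              Finsupp.single_eq_of_ne' (by decide : (1 : Fin 2) ≠ 0), add_zero])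
            (by rw [vec1, Finsupp.add_apply, Finsupp.single_eq_same]; omega)
          rw [heq]
          exact Finset.add_mem_add hv hTy
        · obtain ⟨w, hw, rfl⟩ := Finset.mem_image.mp hc'
          have hwd := hTdeg w (Finset.mem_coe.mpr hw)
          have heq : vec (w 0) (d + e - w 0) = Finsupp.single 1 d + w := ext2
            (by rw [vec0, Finsupp.add_apply,
              Finsupp.single_eq_of_ne' (by decide : (1 : Fin 2) ≠ 0), zero_add])
            (by rw [vec1, Finsupp.add_apply, Finsupp.single_eq_same]; omega)
          rw [heq]
          exact Finset.add_mem_add hSy hw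
    have hnotmem : Finsupp.single (0 : Fin 2) (d + e) ∉
        (AF ∪ BF).image fun c => vec c (d + e - c) := by
      intro h
      obtain ⟨c, hc, heq⟩ := Finset.mem_image.mp h
      have h0 : c = d + e := by
        have : vec c (d + e - c) 0 = Finsupp.single (0 : Fin 2) (d + e) 0 := by rw [heq]
        rwa [vec0, Finsupp.single_eq_same] at this
      have hcle : c ≤ d ∨ c ≤ e := by
        rcases Finset.mem_union.mp hc with hc' | hc'
        · exact Or.inl (hAle c hc')
        · exact Or.inr (hBle c hc')
      omega
    calc GF.card ≤ (AF ∪ BF).card := h1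
      _ < (AF ∪ BF).card + 1 := Nat.lt_succ_self _
      _ = (insert (Finsupp.single 0 (d + e))
          ((AF ∪ BF).image fun c => vec c (d + e - c))).card := by
        rw [Finset.card_insert_of_notMem hnotmem, Finset.card_image_of_injOn hψinj]
      _ ≤ (SF + TF).card := Finset.card_le_card hsub
  exact lt_of_le_of_lt hupper (lt_of_lt_of_le hcard hlower)
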